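/- Suppose κ > 0 and σ ∈ (0,1) satisfy ‖R̄^k − 1_n π^T‖ ≤ κ σ^k for all k ≥ 0, and let ṽ := sup_{k≥0} max_{1≤i≤n} ((R̄^k)_{ii})^{-1} (finite). Then for all k ≥ 1: max_{1≤i≤n} |((R̄^k)_{ii})^{-1} − ((R̄^{k−1})_{ii})^{-1}| ≤ 2 ṽ² √n κ σ^{k−1}. -/

import Mathlib

open Matrix Filter
open scoped Kronecker

noncomputable section

/-- Euclidean norm on `ι → ℝ`. -/
def eucNorm {ι : Type*} [Fintype ι] (z : ι → ℝ) : ℝ := Real.sqrt (∑ i, z i ^ 2)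

/-- Spectral norm (operator 2-norm) of a square real matrix. -/
def specNorm {ι : Type*} [Fintype ι] (A : Matrix ι ι ℝ) : ℝ :=
  sSup {c : ℝ | ∃ z : ι → ℝ, eucNorm z ≤ 1 ∧ c = eucNorm (A.mulVec z)}

/-- Matrix norm induced by a vector norm `N`: `sup_{z ≠ 0} N (A z) / N z`. -/
def opNorm {ι : Type*} [Fintype ι] (N : (ι → ℝ) → ℝ) (A : Matrix ι ι ℝ) : ℝ :=
  sSup {c : ℝ | ∃ z : ι → ℝ, z ≠ 0 ∧ c = N (A.mulVec z) / N z}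

/-- `g` is the gradient of `f : ℝ^p → ℝ`. -/
def IsGradient {p : ℕ} (f : (Fin p → ℝ) → ℝ) (g : (Fin p → ℝ) → Fin p → ℝ) : Prop :=
  ∀ x, HasFDerivAt f (∑ j, g x j • (ContinuousLinearMap.proj j : (Fin p → ℝ) →L[ℝ] ℝ)) x

/-- `R = R̄ ⊗ I_p`. -/
def RK (n p : ℕ) (Rb : Matrix (Fin n) (Fin n) ℝ) :
    Matrix (Fin n × Fin p) (Fin n × Fin p) ℝ :=
  Rb ⊗ₖ (1 : Matrix (Fin p) (Fin p) ℝ)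

/-- `V_∞ = (1_n π^T) ⊗ I_p`. -/
def VinfK (n p : ℕ) (π : Fin n → ℝ) :
    Matrix (Fin n × Fin p) (Fin n × Fin p) ℝ :=
  (Matrix.of (fun _ j => π j) : Matrix (Fin n) (Fin n) ℝ) ⊗ₖ (1 : Matrix (Fin p) (Fin p) ℝ)

/-- `V(k) = R̄^k ⊗ I_p`. -/
def VK (n p : ℕ) (Rb : Matrix (Fin n) (Fin n) ℝ) (k : ℕ) :
    Matrix (Fin n × Fin p) (Fin n × Fin p) ℝ :=
  (Rb ^ k) ⊗ₖ (1 : Matrix (Fin p) (Fin p) ℝ)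

/-- `Ṽ(k)⁻¹ = diag(((R̄^k)_{11})⁻¹, …, ((R̄^k)_{nn})⁻¹) ⊗ I_p`. -/
def VtinvK (n p : ℕ) (Rb : Matrix (Fin n) (Fin n) ℝ) (k : ℕ) :
    Matrix (Fin n × Fin p) (Fin n × Fin p) ℝ :=
  Matrix.diagonal (fun q => ((Rb ^ k) q.1 q.1)⁻¹)

/-- `∇f(z) = (∇f_1(z_1), …, ∇f_n(z_n))` block-wise. -/
def gradf {n p : ℕ} (g : Fin n → (Fin p → ℝ) → Fin p → ℝ) (z : Fin n × Fin p → ℝ) :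
    Fin n × Fin p → ℝ :=
  fun q => g q.1 (fun j => z (q.1, j)) q.2

/-- `x*_vec = 1_n ⊗ x*`. -/
def starVec (n p : ℕ) (xstar : Fin p → ℝ) : Fin n × Fin p → ℝ := fun q => xstar q.2

end


section Aux

lemma entry_le_specNorm {ι : Type*} [Fintype ι] [DecidableEq ι] (A : Matrix ι ι ℝ)
    (i j : ι) : |A i j| ≤ specNorm A := by
  have hmem : eucNorm (A.mulVec (Pi.single j 1)) ∈
      {c : ℝ | ∃ z : ι → ℝ, eucNorm z ≤ 1 ∧ c = eucNorm (A.mulVec z)} := by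
    refine ⟨Pi.single j 1, ?_, rfl⟩
    have h1 : ∑ l, (Pi.single j 1 : ι → ℝ) l ^ 2 = 1 := by
      rw [Finset.sum_eq_single j]
      · simp
      · intro b _ hb; simp [Pi.single_apply, hb]
      · simp
    simp [eucNorm, h1]
  have hbdd : BddAbove {c : ℝ | ∃ z : ι → ℝ, eucNorm z ≤ 1 ∧ c = eucNorm (A.mulVec z)} := by
    refine ⟨Real.sqrt (∑ a, ∑ b, A a b ^ 2), ?_⟩
    rintro c ⟨z, hz, rfl⟩
    simp only [eucNorm] at hz ⊢
    have hz2 : ∑ l, z l ^ 2 ≤ 1 := by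
      have h0 : (0:ℝ) ≤ ∑ l, z l ^ 2 := by positivity
      have := Real.sq_sqrt h0
      nlinarith [Real.sqrt_nonneg (∑ l, z l ^ 2)]
    apply Real.sqrt_le_sqrt
    have hrow : ∀ a, (A.mulVec z a) ^ 2 ≤ ∑ b, A a b ^ 2 := by
      intro a
      have hcs := Finset.sum_mul_sq_le_sq_mul_sq Finset.univ (fun b => A a b) z
      have h0 : (0:ℝ) ≤ ∑ b, A a b ^ 2 := by positivity
      calc (A.mulVec z a) ^ 2 = (∑ b, A a b * z b) ^ 2 := by
              simp [Matrix.mulVec, dotProduct]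
        _ ≤ (∑ b, A a b ^ 2) * ∑ b, z b ^ 2 := hcs
        _ ≤ (∑ b, A a b ^ 2) * 1 := by exact mul_le_mul_of_nonneg_left hz2 h0
        _ = ∑ b, A a b ^ 2 := by ring
    exact Finset.sum_le_sum fun a _ => hrow a
  have hle : eucNorm (A.mulVec (Pi.single j 1)) ≤ specNorm A := le_csSup hbdd hmem
  refine le_trans ?_ hle
  have hv : A.mulVec (Pi.single j 1) = fun a => A a j := by
    rw [Matrix.mulVec_single]; simp; rfl
  rw [hv]
  have : A i j ^ 2 ≤ ∑ a, A a j ^ 2 :=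
    Finset.single_le_sum (f := fun a => A a j ^ 2) (fun a _ => sq_nonneg _) (Finset.mem_univ i)
  calc |A i j| = Real.sqrt (A i j ^ 2) := (Real.sqrt_sq_eq_abs _).symm
    _ ≤ eucNorm (fun a => A a j) := Real.sqrt_le_sqrt this

lemma pow_entries_nonneg {n : ℕ} (Rb : Matrix (Fin n) (Fin n) ℝ)
    (hnonneg : ∀ i j, 0 ≤ Rb i j) : ∀ k i j, 0 ≤ (Rb ^ k) i j := by
  intro k
  induction k with
  | zero => intro i j; simp [Matrix.one_apply]; positivity
  | succ m ih =>
    intro i j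
    rw [pow_succ, Matrix.mul_apply]
    exact Finset.sum_nonneg fun l _ => mul_nonneg (ih i l) (hnonneg l j)

lemma pow_diag_pos {n : ℕ} (Rb : Matrix (Fin n) (Fin n) ℝ)
    (hnonneg : ∀ i j, 0 ≤ Rb i j) (hdiag : ∀ i, 0 < Rb i i) :
    ∀ k i, 0 < (Rb ^ k) i i := by
  intro k
  induction k with
  | zero => intro i; simp [Matrix.one_apply]
  | succ m ih =>
    intro i
    rw [pow_succ, Matrix.mul_apply]
    have h1 : (0:ℝ) < (Rb ^ m) i i * Rb i i := mul_pos (ih i) (hdiag i)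
    have h2 : ∀ l ∈ Finset.univ, (0:ℝ) ≤ (Rb ^ m) i l * Rb l i :=
      fun l _ => mul_nonneg (pow_entries_nonneg Rb hnonneg m i l) (hnonneg l i)
    exact lt_of_lt_of_le h1
      (Finset.single_le_sum h2 (Finset.mem_univ i))

end Aux

/-- `max_i |((R̄^k)_{ii})⁻¹ − ((R̄^{k−1})_{ii})⁻¹| ≤ 2 ṽ² √n κ σ^{k−1}` for `k ≥ 1`,
where `ṽ = sup_k max_i ((R̄^k)_{ii})⁻¹`. -/
theorem stmt6 (n : ℕ) (hn : 1 ≤ n) (Rb : Matrix (Fin n) (Fin n) ℝ)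
    (hnonneg : ∀ i j, 0 ≤ Rb i j) (hrow : ∀ i, ∑ j, Rb i j = 1)
    (hdiag : ∀ i, 0 < Rb i i)
    (hirr : ∀ i j, ∃ k : ℕ, 0 < (Rb ^ k) i j)
    (π : Fin n → ℝ) (hπpos : ∀ i, 0 < π i) (hπsum : ∑ i, π i = 1)
    (hπstat : Matrix.vecMul π Rb = π)
    (κ σ : ℝ) (hκ : 0 < κ) (hσ0 : 0 < σ) (hσ1 : σ < 1)
    (hbound : ∀ k : ℕ,
      specNorm (Rb ^ k - (Matrix.of (fun _ j => π j) : Matrix (Fin n) (Fin n) ℝ)) ≤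
        κ * σ ^ k)
    (hbdd : BddAbove (Set.range fun k : ℕ => ⨆ i, ((Rb ^ k) i i)⁻¹)) :
    ∀ k : ℕ, 1 ≤ k → ∀ i : Fin n,
      |((Rb ^ k) i i)⁻¹ - ((Rb ^ (k - 1)) i i)⁻¹| ≤
        2 * (⨆ m : ℕ, ⨆ j, ((Rb ^ m) j j)⁻¹) ^ 2 * Real.sqrt n * κ * σ ^ (k - 1) := by
  intro k hk i
  obtain ⟨m, rfl⟩ : ∃ m, k = m + 1 := ⟨k - 1, (Nat.succ_pred_eq_of_pos hk).symm⟩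
  simp only [Nat.add_sub_cancel]
  have hi : Nonempty (Fin n) := ⟨⟨0, hn⟩⟩
  set v : ℝ := ⨆ m : ℕ, ⨆ j, ((Rb ^ m) j j)⁻¹ with hv
  have hvle : ∀ (l : ℕ) (j : Fin n), ((Rb ^ l) j j)⁻¹ ≤ v := by
    intro l j
    have h1 : ((Rb ^ l) j j)⁻¹ ≤ ⨆ j, ((Rb ^ l) j j)⁻¹ :=
      le_ciSup (f := fun j => ((Rb ^ l) j j)⁻¹) (Set.Finite.bddAbove (Set.finite_range _)) j
    exact h1.trans (le_ciSup hbdd l)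
  have ha : 0 < (Rb ^ (m + 1)) i i := pow_diag_pos Rb hnonneg hdiag _ i
  have hb : 0 < (Rb ^ m) i i := pow_diag_pos Rb hnonneg hdiag _ i
  set a := (Rb ^ (m + 1)) i i
  set b := (Rb ^ m) i i
  have hvpos : 0 < v := lt_of_lt_of_le (inv_pos.mpr ha) (hvle (m + 1) i)
  -- bound on |a - b|
  set Pi : Matrix (Fin n) (Fin n) ℝ :=
    (Matrix.of (fun _ j => π j) : Matrix (Fin n) (Fin n) ℝ) with hPi
  have h1 : |(Rb ^ (m + 1) - Pi) i i| ≤ κ * σ ^ (m + 1) :=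
    le_trans (entry_le_specNorm _ i i) (hbound (m + 1))
  have h2 : |(Rb ^ m - Pi) i i| ≤ κ * σ ^ m :=
    le_trans (entry_le_specNorm _ i i) (hbound m)
  have hsub1 : (Rb ^ (m + 1) - Pi) i i = a - π i := by simp [Matrix.sub_apply, hPi]; rfl
  have hsub2 : (Rb ^ m - Pi) i i = b - π i := by simp [Matrix.sub_apply, hPi]; rfl
  rw [hsub1] at h1; rw [hsub2] at h2
  have hσm : (0:ℝ) < σ ^ m := pow_pos hσ0 m
  have hσle : σ ^ (m + 1) ≤ σ ^ m := by
    rw [pow_succ]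
    nlinarith
  have hab : |a - b| ≤ 2 * κ * σ ^ m := by
    have : |a - b| ≤ |a - π i| + |b - π i| := by
      have := abs_sub (a - π i) (b - π i)
      calc |a - b| = |(a - π i) - (b - π i)| := by ring_nf
        _ ≤ |a - π i| + |b - π i| := abs_sub _ _
    nlinarith
  -- main estimate
  have hinv : |a⁻¹ - b⁻¹| = |a - b| * (a⁻¹ * b⁻¹) := by
    have : a⁻¹ - b⁻¹ = (b - a) * (a⁻¹ * b⁻¹) := by
      field_simp
    rw [this, abs_mul, abs_sub_comm b a,
      abs_of_pos (mul_pos (inv_pos.mpr ha) (inv_pos.mpr hb))]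
  have hva : a⁻¹ ≤ v := hvle (m + 1) i
  have hvb : b⁻¹ ≤ v := hvle m i
  have hainv : 0 < a⁻¹ := inv_pos.mpr ha
  have hbinv : 0 < b⁻¹ := inv_pos.mpr hb
  have hsqrt : 1 ≤ Real.sqrt n := Real.one_le_sqrt.mpr (by exact_mod_cast hn)
  have hstep : |a⁻¹ - b⁻¹| ≤ 2 * κ * σ ^ m * (v * v) := by
    rw [hinv]
    have h3 : a⁻¹ * b⁻¹ ≤ v * v := by nlinarith
    have h4 : 0 ≤ a⁻¹ * b⁻¹ := le_of_lt (mul_pos hainv hbinv)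
    nlinarith [abs_nonneg (a - b)]
  calc |a⁻¹ - b⁻¹| ≤ 2 * κ * σ ^ m * (v * v) := hstep
    _ = 2 * v ^ 2 * 1 * κ * σ ^ m := by ring
    _ ≤ 2 * v ^ 2 * Real.sqrt n * κ * σ ^ m := by
        have hpos : (0:ℝ) ≤ 2 * v ^ 2 * κ * σ ^ m :=
          mul_nonneg (mul_nonneg (mul_nonneg (by norm_num) (sq_nonneg v)) hκ.le) hσm.le
        nlinarith [mul_nonneg (by linarith : (0:ℝ) ≤ Real.sqrt n - 1) hpos]
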